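/- Under the hypotheses of the squared-Hellinger subadditivity theorem (P and Q are joint distributions on finitely-valued variables X_1, …, X_n partitioned into blocks S_1, …, S_L with conditioning sets Π_l ⊆ S_1 ∪ ⋯ ∪ S_{l−1} and the common factorization P(x) = P_{S_1}(x_{S_1})·∏_{l≥2} P_{S_l | Π_l}(x_{S_l} | x_{Π_l}), and similarly for Q), if H²(P, Q) ≥ ε for some ε ≥ 0, then there exists some l ∈ {1, …, L} such that H²(P_{S_l ∪ Π_l}, Q_{S_l ∪ Π_l}) ≥ ε / L (with the convention Π_1 = ∅). -/

import Mathlib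

/-- The squared Hellinger distance `H²(p,q) = 1 - ∑ₖ √(pₖ qₖ)` between two
probability mass functions on a finite type. -/
noncomputable def sqHellinger {α : Type*} [Fintype α] (p q : α → ℝ) : ℝ :=
  1 - ∑ k, Real.sqrt (p k * q k)

open scoped Classical in
/-- The marginal of a joint distribution `P` on coordinates in the finite set `T`. -/
noncomputable def marg {ι : Type*} [Fintype ι] {α : ι → Type*} [∀ i, Fintype (α i)]
    (P : (∀ i, α i) → ℝ) (T : Finset ι) : ((i : T) → α i) → ℝ :=
  fun y => ∑ x : ∀ i, α i, if (∀ i : T, x i = y i) then P x else 0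

open scoped Classical

namespace SqHLoc

variable {ι : Type*} [Fintype ι] [DecidableEq ι] {α : ι → Type*} [∀ i, Fintype (α i)]

lemma sum_univ_inst {X : Type*} (i1 i2 : Fintype X) (f : X → ℝ) :
    @Finset.sum X ℝ _ (@Finset.univ X i1) f = @Finset.sum X ℝ _ (@Finset.univ X i2) f := by
  rw [Subsingleton.elim i1 i2]

lemma marg_def (P : (∀ i, α i) → ℝ) (T : Finset ι) (y : (i : T) → α i) :
    marg P T y = ∑ x : ∀ i, α i, if (∀ i : T, x i = y i) then P x else 0 := by
  unfold marg
  exact sum_univ_inst _ _ _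

/-- restriction map between coordinate products -/
def res {T T' : Finset ι} (h : T ⊆ T') (y : (i : T') → α i) : (i : T) → α i :=
  fun i => y ⟨i.1, h i.2⟩

lemma marg_nonneg (P : (∀ i, α i) → ℝ) (hP0 : ∀ x, 0 ≤ P x) (T : Finset ι)
    (y : (i : T) → α i) : 0 ≤ marg P T y := by
  refine Finset.sum_nonneg fun x _ => ?_
  split
  · exact hP0 x
  · exact le_rfl

lemma sum_restrict_eq {T : Finset ι} (x : ∀ i, α i) (f : ((i : T) → α i) → ℝ) :
    ∑ y : (i : T) → α i, (if (∀ i : T, x i = y i) then f y else 0) = f (fun i => x i.1) := by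
  rw [Finset.sum_eq_single (fun i : T => x i.1)]
  · simp
  · intro y _ hy
    rw [if_neg]
    intro h
    exact hy (funext fun i => (h i).symm)
  · simp

lemma ite_sum {β : Type*} {c : Prop} [Decidable c] {s : Finset β} (g : β → ℝ) :
    (if c then ∑ x ∈ s, g x else 0) = ∑ x ∈ s, (if c then g x else 0) := by
  split <;> simp

lemma sum_fiber_marg (P : (∀ i, α i) → ℝ) {T T' : Finset ι} (h : T ⊆ T') (π : (i : T) → α i) :
    ∑ y : (i : T') → α i, (if res (α := α) h y = π then marg P T' y else 0) = marg P T π := by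
  simp only [marg_def]
  simp only [ite_sum]
  rw [Finset.sum_comm]
  refine Finset.sum_congr rfl fun x _ => ?_
  have : ∀ y : (i : T') → α i,
      (if res (α := α) h y = π then if (∀ i : T', x i = y i) then P x else 0 else 0)
      = (if (∀ i : T', x i = y i) then (if res (α := α) h y = π then P x else 0) else 0) := by
    intro y; split_ifs <;> rfl
  rw [Finset.sum_congr rfl fun y _ => this y, sum_restrict_eq x
    (fun y => if res (α := α) h y = π then P x else 0)]
  have hres : res (α := α) h (fun i : T' => x i.1) = fun i : T => x i.1 := rfl
  rw [hres]
  exact if_congr funext_iff rfl rfl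

lemma sum_marg (P : (∀ i, α i) → ℝ) (T : Finset ι) :
    ∑ y, marg P T y = ∑ x, P x := by
  simp only [marg_def]
  rw [Finset.sum_comm]
  exact Finset.sum_congr rfl fun x _ => sum_restrict_eq x (fun _ => P x)

lemma sum_sqrt_mul_le {β : Type*} (s : Finset β) (f g : β → ℝ)
    (hf : ∀ b ∈ s, 0 ≤ f b) (hg : ∀ b ∈ s, 0 ≤ g b) :
    ∑ b ∈ s, Real.sqrt (f b * g b) ≤ Real.sqrt ((∑ b ∈ s, f b) * (∑ b ∈ s, g b)) := by
  have h2 : (∑ b ∈ s, Real.sqrt (f b * g b)) ^ 2 ≤ (∑ b ∈ s, f b) * (∑ b ∈ s, g b) :=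
    Finset.sum_sq_le_sum_mul_sum_of_sq_eq_mul s hf hg
      (fun b hb => Real.sq_sqrt (mul_nonneg (hf b hb) (hg b hb)))
  have h0 : 0 ≤ ∑ b ∈ s, Real.sqrt (f b * g b) :=
    Finset.sum_nonneg fun b _ => Real.sqrt_nonneg _
  exact (Real.le_sqrt h0 (le_trans (sq_nonneg _) h2)).mpr h2


section Glue
variable {A B : Finset ι}

/-- glue two partial assignments on `A` and `B` into one on `A ∪ B`. -/
noncomputable def glue (yA : (i : A) → α i) (yB : (i : B) → α i) : (i : (A ∪ B : Finset ι)) → α i :=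
  fun i => if h : i.1 ∈ A then yA ⟨i.1, h⟩
    else yB ⟨i.1, (Finset.mem_union.1 i.2).resolve_left h⟩

lemma fiber_prod (π : (i : (A ∩ B : Finset ι)) → α i)
    (F : ((i : A) → α i) → ℝ) (G : ((i : B) → α i) → ℝ) :
    ∑ z : (i : (A ∪ B : Finset ι)) → α i,
      (if res (α := α) (Finset.inter_subset_left.trans Finset.subset_union_left) z = π then
        F (res Finset.subset_union_left z) * G (res Finset.subset_union_right z) else 0)
    = (∑ y : (i : A) → α i, if res (α := α) Finset.inter_subset_left y = π then F y else 0) *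
      (∑ w : (i : B) → α i, if res (α := α) Finset.inter_subset_right w = π then G w else 0) := by
  rw [← Finset.sum_filter, ← Finset.sum_filter, ← Finset.sum_filter, Finset.sum_mul_sum, ← Finset.sum_product']
  refine Finset.sum_nbij' (fun z => (res Finset.subset_union_left z, res Finset.subset_union_right z))
    (fun p => glue p.1 p.2) ?_ ?_ ?_ ?_ ?_
  · intro z hz
    simp only [Finset.mem_filter, Finset.mem_univ, true_and] at hz
    simp only [Finset.mem_product, Finset.mem_filter, Finset.mem_univ, true_and]
    exact ⟨hz, hz⟩
  · intro p hp
    simp only [Finset.mem_product, Finset.mem_filter, Finset.mem_univ, true_and] at hp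
    obtain ⟨hy, hw⟩ := hp
    simp only [Finset.mem_filter, Finset.mem_univ, true_and]
    funext i
    have hiA : i.1 ∈ A := (Finset.mem_inter.1 i.2).1
    show glue p.1 p.2 ⟨i.1, _⟩ = π i
    unfold glue
    rw [dif_pos hiA]
    exact congrFun hy i
  · intro z _
    funext i
    show glue _ _ i = z i
    unfold glue
    split <;> rfl
  · intro p hp
    simp only [Finset.mem_product, Finset.mem_filter, Finset.mem_univ, true_and] at hp
    obtain ⟨hy, hw⟩ := hp
    refine Prod.ext ?_ ?_
    · funext i
      show glue p.1 p.2 ⟨i.1, _⟩ = p.1 i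
      unfold glue
      rw [dif_pos i.2]
    · funext i
      show glue p.1 p.2 ⟨i.1, _⟩ = p.2 i
      unfold glue
      split
      · next h =>
        have hmem : i.1 ∈ A ∩ B := Finset.mem_inter.2 ⟨h, i.2⟩
        have h1 := congrFun hy (⟨i.1, hmem⟩ : (A ∩ B : Finset ι))
        have h2 := congrFun hw (⟨i.1, hmem⟩ : (A ∩ B : Finset ι))
        exact h1.trans h2.symm
      · rfl
  · intro z _
    rfl

end Glue

/-- fiber-restricted Bhattacharyya sum -/
noncomputable def afib (P Q : (∀ i, α i) → ℝ) {T T' : Finset ι} (h : T ⊆ T')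
    (π : (i : T) → α i) : ℝ :=
  ∑ y : (i : T') → α i, if res (α := α) h y = π then
    Real.sqrt (marg P T' y * marg Q T' y) else 0

lemma afib_nonneg (P Q : (∀ i, α i) → ℝ) {T T' : Finset ι} (h : T ⊆ T')
    (π : (i : T) → α i) : 0 ≤ afib P Q h π := by
  refine Finset.sum_nonneg fun y _ => ?_
  split
  · exact Real.sqrt_nonneg _
  · exact le_rfl

lemma sum_afib (P Q : (∀ i, α i) → ℝ) {T T' : Finset ι} (h : T ⊆ T') :
    ∑ π : (i : T) → α i, afib P Q h π
      = ∑ y : (i : T') → α i, Real.sqrt (marg P T' y * marg Q T' y) := by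
  unfold afib
  rw [Finset.sum_comm]
  refine Finset.sum_congr rfl fun y _ => ?_
  simp [Finset.sum_ite_eq]

lemma afib_le (P Q : (∀ i, α i) → ℝ) (hP0 : ∀ x, 0 ≤ P x) (hQ0 : ∀ x, 0 ≤ Q x)
    {T T' : Finset ι} (h : T ⊆ T') (π : (i : T) → α i) :
    afib P Q h π ≤ Real.sqrt (marg P T π * marg Q T π) := by
  unfold afib
  rw [← Finset.sum_filter]
  have hle := sum_sqrt_mul_le (Finset.univ.filter (fun y => res (α := α) h y = π))
    (marg P T') (marg Q T') (fun y _ => marg_nonneg P hP0 T' y)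
    (fun y _ => marg_nonneg Q hQ0 T' y)
  have e1 : ∑ y ∈ Finset.univ.filter (fun y => res (α := α) h y = π), marg P T' y
      = marg P T π := by rw [Finset.sum_filter]; exact sum_fiber_marg P h π
  have e2 : ∑ y ∈ Finset.univ.filter (fun y => res (α := α) h y = π), marg Q T' y
      = marg Q T π := by rw [Finset.sum_filter]; exact sum_fiber_marg Q h π
  rw [e1, e2] at hle
  exact hle

lemma step (P Q : (∀ i, α i) → ℝ) (hP0 : ∀ x, 0 ≤ P x) (hP1 : ∑ x, P x = 1)
    (hQ0 : ∀ x, 0 ≤ Q x) (hQ1 : ∑ x, Q x = 1) (A B : Finset ι)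
    (hPf : ∀ x : ∀ i, α i, marg P (A ∪ B) (fun i => x i.1) * marg P (A ∩ B) (fun i => x i.1)
      = marg P A (fun i => x i.1) * marg P B (fun i => x i.1))
    (hQf : ∀ x : ∀ i, α i, marg Q (A ∪ B) (fun i => x i.1) * marg Q (A ∩ B) (fun i => x i.1)
      = marg Q A (fun i => x i.1) * marg Q B (fun i => x i.1)) :
    sqHellinger (marg P (A ∪ B)) (marg Q (A ∪ B)) ≤
      sqHellinger (marg P A) (marg Q A) + sqHellinger (marg P B) (marg Q B) := by
  have hne : Nonempty (∀ i, α i) := by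
    by_contra hc
    rw [not_nonempty_iff] at hc
    haveI := hc
    rw [Finset.univ_eq_empty, Finset.sum_empty] at hP1
    exact one_ne_zero hP1.symm
  haveI : ∀ i, Nonempty (α i) := fun i => ⟨hne.some i⟩
  set hKA : A ∩ B ⊆ A := Finset.inter_subset_left with hKAdef
  set hKB : A ∩ B ⊆ B := Finset.inter_subset_right with hKBdef
  set hAU : A ⊆ A ∪ B := Finset.subset_union_left with hAUdef
  set hBU : B ⊆ A ∪ B := Finset.subset_union_right with hBUdef
  set hKU : A ∩ B ⊆ A ∪ B := hKA.trans hAU with hKUdef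
  -- extension of a partial assignment to a full one
  set ext : ((i : (A ∪ B : Finset ι)) → α i) → (∀ i, α i) :=
    fun z i => if h : i ∈ A ∪ B then z ⟨i, h⟩ else Classical.arbitrary (α i) with hextdef
  have hfacP : ∀ z : (i : (A ∪ B : Finset ι)) → α i,
      marg P (A ∪ B) z * marg P (A ∩ B) (res hKU z)
        = marg P A (res hAU z) * marg P B (res hBU z) := by
    intro z
    have h1 : (fun i : (A ∪ B : Finset ι) => ext z i.1) = z :=
      funext fun i => dif_pos i.2
    have h2 : (fun i : (A ∩ B : Finset ι) => ext z i.1) = res hKU z :=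
      funext fun i => dif_pos (hKU i.2)
    have h3 : (fun i : A => ext z i.1) = res hAU z :=
      funext fun i => dif_pos (hAU i.2)
    have h4 : (fun i : B => ext z i.1) = res hBU z :=
      funext fun i => dif_pos (hBU i.2)
    have := hPf (ext z)
    rwa [h1, h2, h3, h4] at this
  have hfacQ : ∀ z : (i : (A ∪ B : Finset ι)) → α i,
      marg Q (A ∪ B) z * marg Q (A ∩ B) (res hKU z)
        = marg Q A (res hAU z) * marg Q B (res hBU z) := by
    intro z
    have h1 : (fun i : (A ∪ B : Finset ι) => ext z i.1) = z :=
      funext fun i => dif_pos i.2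
    have h2 : (fun i : (A ∩ B : Finset ι) => ext z i.1) = res hKU z :=
      funext fun i => dif_pos (hKU i.2)
    have h3 : (fun i : A => ext z i.1) = res hAU z :=
      funext fun i => dif_pos (hAU i.2)
    have h4 : (fun i : B => ext z i.1) = res hBU z :=
      funext fun i => dif_pos (hBU i.2)
    have := hQf (ext z)
    rwa [h1, h2, h3, h4] at this
  -- pointwise factorization of square roots
  have hptwise : ∀ z : (i : (A ∪ B : Finset ι)) → α i,
      Real.sqrt (marg P (A ∪ B) z * marg Q (A ∪ B) z) *
        Real.sqrt (marg P (A ∩ B) (res hKU z) * marg Q (A ∩ B) (res hKU z))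
      = Real.sqrt (marg P A (res hAU z) * marg Q A (res hAU z)) *
        Real.sqrt (marg P B (res hBU z) * marg Q B (res hBU z)) := by
    intro z
    rw [← Real.sqrt_mul (mul_nonneg (marg_nonneg P hP0 _ _) (marg_nonneg Q hQ0 _ _)),
      ← Real.sqrt_mul (mul_nonneg (marg_nonneg P hP0 _ _) (marg_nonneg Q hQ0 _ _))]
    congr 1
    have expand : marg P (A ∪ B) z * marg Q (A ∪ B) z *
        (marg P (A ∩ B) (res hKU z) * marg Q (A ∩ B) (res hKU z))
        = (marg P (A ∪ B) z * marg P (A ∩ B) (res hKU z)) *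
          (marg Q (A ∪ B) z * marg Q (A ∩ B) (res hKU z)) := by ring
    rw [expand, hfacP z, hfacQ z]
    ring
  -- key identity: c π * m π = a π * b π
  have key : ∀ π : (i : (A ∩ B : Finset ι)) → α i,
      afib P Q hKU π * Real.sqrt (marg P (A ∩ B) π * marg Q (A ∩ B) π)
        = afib P Q hKA π * afib P Q hKB π := by
    intro π
    unfold afib
    rw [Finset.sum_mul, ← fiber_prod π
      (fun y => Real.sqrt (marg P A y * marg Q A y))
      (fun w => Real.sqrt (marg P B w * marg Q B w))]
    refine Finset.sum_congr rfl fun z _ => ?_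
    by_cases hz : res (α := α) hKU z = π
    · rw [if_pos hz, if_pos hz, ← hz]
      exact hptwise z
    · rw [if_neg hz, if_neg hz, zero_mul]
  -- pointwise inequality a + b - m ≤ c
  have hper : ∀ π : (i : (A ∩ B : Finset ι)) → α i,
      afib P Q hKA π + afib P Q hKB π
        - Real.sqrt (marg P (A ∩ B) π * marg Q (A ∩ B) π) ≤ afib P Q hKU π := by
    intro π
    set m := Real.sqrt (marg P (A ∩ B) π * marg Q (A ∩ B) π) with hm
    have ha := afib_le P Q hP0 hQ0 hKA π
    have hb := afib_le P Q hP0 hQ0 hKB π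
    have ha0 := afib_nonneg P Q hKA π
    have hb0 := afib_nonneg P Q hKB π
    have hc0 := afib_nonneg P Q hKU π
    have hm0 : 0 ≤ m := Real.sqrt_nonneg _
    rcases hm0.eq_or_lt with h0 | h0
    · linarith
    · nlinarith [key π, mul_nonneg (sub_nonneg.2 ha) (sub_nonneg.2 hb)]
  -- sum it up
  have hm1 : ∑ π : (i : (A ∩ B : Finset ι)) → α i,
      Real.sqrt (marg P (A ∩ B) π * marg Q (A ∩ B) π) ≤ 1 := by
    have := sum_sqrt_mul_le Finset.univ (marg P (A ∩ B)) (marg Q (A ∩ B))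
      (fun y _ => marg_nonneg P hP0 _ y) (fun y _ => marg_nonneg Q hQ0 _ y)
    rw [sum_marg, sum_marg, hP1, hQ1, mul_one, Real.sqrt_one] at this
    exact this
  have hsum : ∑ π, (afib P Q hKA π + afib P Q hKB π
      - Real.sqrt (marg P (A ∩ B) π * marg Q (A ∩ B) π))
      ≤ ∑ π, afib P Q hKU π := Finset.sum_le_sum fun π _ => hper π
  rw [Finset.sum_sub_distrib, Finset.sum_add_distrib, sum_afib, sum_afib, sum_afib] at hsum
  unfold sqHellinger
  linarith


lemma marg_univ (P : (∀ i, α i) → ℝ) (y : (i : (Finset.univ : Finset ι)) → α i) :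
    marg P Finset.univ y = P (fun i => y ⟨i, Finset.mem_univ i⟩) := by
  simp only [marg_def]
  rw [Finset.sum_eq_single (fun i => y ⟨i, Finset.mem_univ i⟩)]
  · rw [if_pos]
    intro i
    rfl
  · intro x _ hx
    rw [if_neg]
    intro h
    exact hx (funext fun i => h ⟨i, Finset.mem_univ i⟩)
  · simp

lemma sqH_marg_univ (P Q : (∀ i, α i) → ℝ) :
    sqHellinger (marg P Finset.univ) (marg Q Finset.univ) = sqHellinger P Q := by
  unfold sqHellinger
  congr 1
  let e : (∀ i, α i) ≃ ((i : (Finset.univ : Finset ι)) → α i) :=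
    ⟨fun x i => x i.1, fun y i => y ⟨i, Finset.mem_univ i⟩, fun x => rfl, fun y => rfl⟩
  rw [← Equiv.sum_comp e (fun y => Real.sqrt (marg P Finset.univ y * marg Q Finset.univ y))]
  refine Finset.sum_congr rfl fun x _ => ?_
  rw [marg_univ, marg_univ]
  rfl

end SqHLoc


set_option maxHeartbeats 1000000 in
/-- **Localization.**
Variables `X_1, …, X_n` (with finite value types `α i`) are partitioned into disjoint
blocks `S 0, …, S (L-1)`, and for each `l` the conditioning set `Par l` is contained in
`S 0 ∪ ⋯ ∪ S (l-1)`.  If `P` and `Q` are joint distributions admitting the common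
factorization — expressed equivalently by the pointwise conditional-independence
identity: for each `l ≥ 2` (i.e. `0 < l.val`), the marginal on `S 0 ∪ ⋯ ∪ S l` times
the marginal on `Par l` equals the marginal on `S 0 ∪ ⋯ ∪ S (l-1)` times the marginal
on `S l ∪ Par l` — then
and if moreover `H²(P,Q) ≥ ε` for some `ε ≥ 0`, then some block satisfies
`H²(P_{S l ∪ Par l}, Q_{S l ∪ Par l}) ≥ ε / L`
(where `Par 0 = ∅` is forced, so the `l = 0` marginal set is just `S 0`). -/
theorem sqHellinger_localization
    {n L : ℕ} (hL : 0 < L) (α : Fin n → Type*) [∀ i, Fintype (α i)]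
    (S : Fin L → Finset (Fin n))
    (hdisj : ∀ l l' : Fin L, l ≠ l' → Disjoint (S l) (S l'))
    (hcover : Finset.univ.biUnion S = (Finset.univ : Finset (Fin n)))
    (Par : Fin L → Finset (Fin n))
    (hPar : ∀ l : Fin L, Par l ⊆ (Finset.univ.filter (fun j => j < l)).biUnion S)
    (P Q : (∀ i, α i) → ℝ)
    (hP0 : ∀ x, 0 ≤ P x) (hP1 : ∑ x, P x = 1)
    (hQ0 : ∀ x, 0 ≤ Q x) (hQ1 : ∑ x, Q x = 1)
    (hPfac : ∀ l : Fin L, 0 < l.val → ∀ x : ∀ i, α i,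
      marg P ((Finset.univ.filter (fun j => j ≤ l)).biUnion S) (fun i => x i.1) *
          marg P (Par l) (fun i => x i.1) =
        marg P ((Finset.univ.filter (fun j => j < l)).biUnion S) (fun i => x i.1) *
          marg P (S l ∪ Par l) (fun i => x i.1))
    (hQfac : ∀ l : Fin L, 0 < l.val → ∀ x : ∀ i, α i,
      marg Q ((Finset.univ.filter (fun j => j ≤ l)).biUnion S) (fun i => x i.1) *
          marg Q (Par l) (fun i => x i.1) =
        marg Q ((Finset.univ.filter (fun j => j < l)).biUnion S) (fun i => x i.1) *
          marg Q (S l ∪ Par l) (fun i => x i.1))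
    (ε : ℝ) (hε : 0 ≤ ε) (hPQ : sqHellinger P Q ≥ ε) :
    ∃ l : Fin L,
      sqHellinger (marg P (S l ∪ Par l)) (marg Q (S l ∪ Par l)) ≥ ε / L := by
  classical
  by_contra hcon
  push_neg at hcon
  -- abbreviations
  set Tle : Fin L → Finset (Fin n) :=
    fun l => (Finset.univ.filter (fun j => j ≤ l)).biUnion S with hTledef
  set Tlt : Fin L → Finset (Fin n) :=
    fun l => (Finset.univ.filter (fun j => j < l)).biUnion S with hTltdef
  set D : Fin L → ℝ :=
    fun l => sqHellinger (marg P (S l ∪ Par l)) (marg Q (S l ∪ Par l)) with hDdef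
  -- the inductive subadditivity bound
  have key : ∀ k, ∀ hk : k < L,
      sqHellinger (marg P (Tle ⟨k, hk⟩)) (marg Q (Tle ⟨k, hk⟩)) ≤
        ∑ j ∈ Finset.univ.filter (fun j => j ≤ (⟨k, hk⟩ : Fin L)), D j := by
    intro k
    induction k with
    | zero =>
      intro hk
      have hpar0 : Par ⟨0, hk⟩ = ∅ := by
        have h := hPar ⟨0, hk⟩
        have he : (Finset.univ.filter (fun j => j < (⟨0, hk⟩ : Fin L))) = ∅ := by
          ext j
          simp [Fin.lt_def]
        rw [he] at h
        simpa using Finset.subset_empty.1 (by simpa using h)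
      have hfilter : Finset.univ.filter (fun j => j ≤ (⟨0, hk⟩ : Fin L)) = {⟨0, hk⟩} := by
        ext j
        simp [Fin.le_def, Fin.ext_iff, Nat.le_zero]
      have hT : Tle ⟨0, hk⟩ = S ⟨0, hk⟩ ∪ Par ⟨0, hk⟩ := by
        rw [hpar0, Finset.union_empty, hTledef]
        simp only []
        rw [hfilter, Finset.singleton_biUnion]
      rw [hT, hfilter, Finset.sum_singleton]
    | succ k ih =>
      intro hk
      have hk' : k < L := Nat.lt_of_succ_lt hk
      have hA : Tlt ⟨k + 1, hk⟩ = Tle ⟨k, hk'⟩ := by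
        rw [hTltdef, hTledef]
        simp only []
        congr 1
        ext j
        simp [Fin.lt_def, Fin.le_def, Nat.lt_succ_iff]
      have hAB : Tlt ⟨k + 1, hk⟩ ∪ (S ⟨k + 1, hk⟩ ∪ Par ⟨k + 1, hk⟩) = Tle ⟨k + 1, hk⟩ := by
        ext i
        simp only [hTltdef, hTledef, Finset.mem_union, Finset.mem_biUnion, Finset.mem_filter,
          Finset.mem_univ, true_and]
        constructor
        · rintro ((⟨j, hj, hij⟩) | hi | hi)
          · exact ⟨j, le_of_lt hj, hij⟩
          · exact ⟨⟨k + 1, hk⟩, le_refl _, hi⟩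
          · have h2 := hPar ⟨k + 1, hk⟩ hi
            simp only [Finset.mem_biUnion, Finset.mem_filter, Finset.mem_univ, true_and] at h2
            obtain ⟨j, hj, hij⟩ := h2
            exact ⟨j, le_of_lt hj, hij⟩
        · rintro ⟨j, hj, hij⟩
          rcases eq_or_lt_of_le hj with he | hlt
          · right; left; rwa [he] at hij -- j = l
          · left; exact ⟨j, hlt, hij⟩
      have hK : Tlt ⟨k + 1, hk⟩ ∩ (S ⟨k + 1, hk⟩ ∪ Par ⟨k + 1, hk⟩) = Par ⟨k + 1, hk⟩ := by
        apply Finset.Subset.antisymm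
        · intro i hi
          rw [Finset.mem_inter] at hi
          obtain ⟨h1, h2⟩ := hi
          rcases Finset.mem_union.1 h2 with hS | hp
          · exfalso
            simp only [hTltdef, Finset.mem_biUnion, Finset.mem_filter, Finset.mem_univ,
              true_and] at h1
            obtain ⟨j, hj, hij⟩ := h1
            exact (Finset.disjoint_left.1 (hdisj j ⟨k + 1, hk⟩ (ne_of_lt hj)) hij) hS
          · exact hp
        · intro i hi
          exact Finset.mem_inter.2 ⟨hPar ⟨k + 1, hk⟩ hi, Finset.mem_union.2 (Or.inr hi)⟩
      have hpf : ∀ x : ∀ i, α i,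
          marg P (Tlt ⟨k + 1, hk⟩ ∪ (S ⟨k + 1, hk⟩ ∪ Par ⟨k + 1, hk⟩)) (fun i => x i.1) *
              marg P (Tlt ⟨k + 1, hk⟩ ∩ (S ⟨k + 1, hk⟩ ∪ Par ⟨k + 1, hk⟩)) (fun i => x i.1) =
            marg P (Tlt ⟨k + 1, hk⟩) (fun i => x i.1) *
              marg P (S ⟨k + 1, hk⟩ ∪ Par ⟨k + 1, hk⟩) (fun i => x i.1) := by
        intro x
        rw [hAB, hK]
        exact hPfac ⟨k + 1, hk⟩ (Nat.succ_pos k) x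
      have hqf : ∀ x : ∀ i, α i,
          marg Q (Tlt ⟨k + 1, hk⟩ ∪ (S ⟨k + 1, hk⟩ ∪ Par ⟨k + 1, hk⟩)) (fun i => x i.1) *
              marg Q (Tlt ⟨k + 1, hk⟩ ∩ (S ⟨k + 1, hk⟩ ∪ Par ⟨k + 1, hk⟩)) (fun i => x i.1) =
            marg Q (Tlt ⟨k + 1, hk⟩) (fun i => x i.1) *
              marg Q (S ⟨k + 1, hk⟩ ∪ Par ⟨k + 1, hk⟩) (fun i => x i.1) := by
        intro x
        rw [hAB, hK]
        exact hQfac ⟨k + 1, hk⟩ (Nat.succ_pos k) x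
      have hstep := SqHLoc.step P Q hP0 hP1 hQ0 hQ1
        (Tlt ⟨k + 1, hk⟩) (S ⟨k + 1, hk⟩ ∪ Par ⟨k + 1, hk⟩) hpf hqf
      rw [hAB, hA] at hstep
      have hfins : Finset.univ.filter (fun j => j ≤ (⟨k + 1, hk⟩ : Fin L)) =
          insert (⟨k + 1, hk⟩ : Fin L) (Finset.univ.filter (fun j => j ≤ (⟨k, hk'⟩ : Fin L))) := by
        ext j
        simp only [Finset.mem_filter, Finset.mem_univ, true_and, Finset.mem_insert,
          Fin.le_def, Fin.ext_iff]
        omega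
      rw [hfins, Finset.sum_insert (by simp [Fin.le_def])]
      calc sqHellinger (marg P (Tle ⟨k + 1, hk⟩)) (marg Q (Tle ⟨k + 1, hk⟩))
          ≤ sqHellinger (marg P (Tle ⟨k, hk'⟩)) (marg Q (Tle ⟨k, hk'⟩)) +
              D ⟨k + 1, hk⟩ := hstep
        _ ≤ (∑ j ∈ Finset.univ.filter (fun j => j ≤ (⟨k, hk'⟩ : Fin L)), D j) +
              D ⟨k + 1, hk⟩ := add_le_add (ih hk') le_rfl
        _ = D ⟨k + 1, hk⟩ + ∑ j ∈ Finset.univ.filter (fun j => j ≤ (⟨k, hk'⟩ : Fin L)), D j := by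
              ring
  -- apply at the last index
  have hlastlt : L - 1 < L := Nat.sub_lt hL Nat.one_pos
  have hchain := key (L - 1) hlastlt
  have hflast : Finset.univ.filter (fun j => j ≤ (⟨L - 1, hlastlt⟩ : Fin L)) = Finset.univ := by
    apply Finset.filter_true_of_mem
    intro j _
    rw [Fin.le_def]
    exact Nat.le_sub_one_of_lt j.isLt
  have hTlast : Tle ⟨L - 1, hlastlt⟩ = Finset.univ := by
    rw [hTledef]
    simp only []
    rw [hflast, hcover]
  rw [hTlast, hflast] at hchain
  rw [SqHLoc.sqH_marg_univ] at hchain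
  have hlt : ∑ j : Fin L, D j < ∑ _j : Fin L, ε / L :=
    Finset.sum_lt_sum_of_nonempty ⟨⟨0, hL⟩, Finset.mem_univ _⟩ (fun j _ => hcon j)
  rw [Finset.sum_const, Finset.card_univ, Fintype.card_fin, nsmul_eq_mul] at hlt
  have hLne : (L : ℝ) ≠ 0 := Nat.cast_ne_zero.2 hL.ne'
  rw [mul_div_cancel₀ _ hLne] at hlt
  linarith
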